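/- Let J ⊆ I ⊊ R be ideals of a Noetherian commutative ring R such that the image of I in R/J contains a regular element of R/J. Then the Valabrega–Valla module 𝒱𝒱_{J⊆I} equals the zeroth local cohomology H⁰_{I/J}(𝒜) of the Aluffi algebra 𝒜 = 𝒜_{R↠R/J}(I/J) with respect to the ideal I/J, i.e., 𝒱𝒱_{J⊆I} = {x ∈ 𝒜 : (I/J)^n · x = 0 for some n ≥ 0}. In particular, there exists an integer k ≥ 0 such that I^k·(J ∩ I^t) ⊆ J·I^{t-1} for every t ≥ 1. -/

import Mathlib

open Polynomial

variable {R : Type*} [CommRing R]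

/-- The defining ideal `(J, J̃)·Rees_R(I)` of the Aluffi algebra inside the Rees algebra. -/
noncomputable def aluffiIdeal (I J : Ideal R) : Ideal (reesAlgebra I) :=
  Ideal.span {x : reesAlgebra I | ∃ a ∈ J, (x : R[X]) = C a ∨ (x : R[X]) = C a * X}

/-- The (R-embedded) Aluffi algebra of `I/J`, presented as `Rees_R(I)/(J, J̃)Rees_R(I)`. -/
noncomputable abbrev AluffiAlgebra (I J : Ideal R) :=
  reesAlgebra I ⧸ aluffiIdeal I J

/-- The extended–contracted ideal `𝔭̃ = 𝔭R[u] ∩ Rees_R(I) = ⊕_{t≥0} (𝔭 ∩ I^t)u^t` of an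
ideal `𝔭 ⊆ R` inside the Rees algebra of `I`. -/
noncomputable def tildeIdeal (I p : Ideal R) : Ideal (reesAlgebra I) :=
  Ideal.comap ((reesAlgebra I).val.toRingHom) (p.map (Polynomial.C : R →+* R[X]))

lemma mem_tildeIdeal_iff (I p : Ideal R) (y : reesAlgebra I) :
    y ∈ tildeIdeal I p ↔ ∀ n, (y : R[X]).coeff n ∈ p := by
  simp [tildeIdeal, Ideal.mem_comap, Ideal.mem_map_C_iff]

lemma aluffi_le_tilde (I J : Ideal R) : aluffiIdeal I J ≤ tildeIdeal I J := by
  rw [aluffiIdeal, Ideal.span_le]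
  rintro x ⟨a, ha, hx | hx⟩ <;>
  · rw [SetLike.mem_coe, mem_tildeIdeal_iff]
    intro n
    rw [hx]
    first
      | rw [coeff_C]; split <;> simp [ha]
      | rw [C_mul_X_eq_monomial, coeff_monomial]; split <;> simp [ha]

lemma monomial_mem_aluffi (I J : Ideal R) (hJI : J ≤ I) (t : ℕ) (c : R) (hc : c ∈ J * I ^ t) :
    ∃ h : (monomial (t + 1) c : R[X]) ∈ reesAlgebra I,
      (⟨monomial (t + 1) c, h⟩ : reesAlgebra I) ∈ aluffiIdeal I J := by
  refine Submodule.mul_induction_on hc (fun j hj m hm => ?_) (fun x y ihx ihy => ?_)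
  · have hjI : j ∈ I ^ 1 := by rw [pow_one]; exact hJI hj
    have hx : (C j * X : R[X]) ∈ reesAlgebra I := by
      rw [C_mul_X_eq_monomial]; exact reesAlgebra.monomial_mem.mpr hjI
    have hm' : (monomial t m : R[X]) ∈ reesAlgebra I := reesAlgebra.monomial_mem.mpr hm
    have hpoly : (monomial (t + 1) (j * m) : R[X]) = C j * X * monomial t m := by
      rw [C_mul_X_eq_monomial, monomial_mul_monomial, add_comm 1 t]
    have h : (monomial (t + 1) (j * m) : R[X]) ∈ reesAlgebra I := by
      rw [hpoly]; exact mul_mem hx hm'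
    refine ⟨h, ?_⟩
    have key : (⟨monomial (t + 1) (j * m), h⟩ : reesAlgebra I) =
        ⟨C j * X, hx⟩ * ⟨monomial t m, hm'⟩ := Subtype.ext hpoly
    rw [key]
    exact Ideal.mul_mem_right _ _ (Ideal.subset_span ⟨j, hj, Or.inr rfl⟩)
  · obtain ⟨hxm, ihx⟩ := ihx
    obtain ⟨hym, ihy⟩ := ihy
    have hpoly : (monomial (t + 1) (x + y) : R[X]) =
        monomial (t + 1) x + monomial (t + 1) y := by rw [map_add]
    have h : (monomial (t + 1) (x + y) : R[X]) ∈ reesAlgebra I := by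
      rw [hpoly]; exact add_mem hxm hym
    refine ⟨h, ?_⟩
    have key : (⟨monomial (t + 1) (x + y), h⟩ : reesAlgebra I) =
        ⟨monomial (t + 1) x, hxm⟩ + ⟨monomial (t + 1) y, hym⟩ := Subtype.ext hpoly
    rw [key]
    exact add_mem ihx ihy

lemma mem_aluffi_of_coeffs_aux (I J : Ideal R) (hJI : J ≤ I) :
    ∀ (n : ℕ) (z : R[X]) (hz : z ∈ reesAlgebra I), z.natDegree ≤ n →
      z.coeff 0 ∈ J → (∀ t, z.coeff (t + 1) ∈ J * I ^ t) →
      (⟨z, hz⟩ : reesAlgebra I) ∈ aluffiIdeal I J := by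
  intro n
  induction n with
  | zero =>
    intro z hz hdeg h0 _
    have hzC : z = C (z.coeff 0) := Polynomial.eq_C_of_natDegree_le_zero hdeg
    exact Ideal.subset_span ⟨z.coeff 0, h0, Or.inl hzC⟩
  | succ n ih =>
    intro z hz hdeg h0 ht
    by_cases hd : z.natDegree ≤ n
    · exact ih z hz hd h0 ht
    push_neg at hd
    have hdeq : z.natDegree = n + 1 := le_antisymm hdeg hd
    have hsplit : z = z.eraseLead + monomial (n + 1) (z.coeff (n + 1)) := by
      conv_lhs => rw [← Polynomial.eraseLead_add_monomial_natDegree_leadingCoeff z]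
      rw [Polynomial.leadingCoeff, hdeq]
    have hz1 : z.eraseLead ∈ reesAlgebra I := by
      rw [mem_reesAlgebra_iff]
      intro i
      rw [Polynomial.eraseLead_coeff]
      split
      · exact zero_mem _
      · exact (mem_reesAlgebra_iff I z).mp hz i
    have hz2 : (monomial (n + 1) (z.coeff (n + 1)) : R[X]) ∈ reesAlgebra I :=
      reesAlgebra.monomial_mem.mpr ((mem_reesAlgebra_iff I z).mp hz (n + 1))
    have m1 : (⟨z.eraseLead, hz1⟩ : reesAlgebra I) ∈ aluffiIdeal I J := by
      refine ih _ hz1 ?_ ?_ ?_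
      · have := Polynomial.eraseLead_natDegree_le z
        omega
      · rw [Polynomial.eraseLead_coeff]
        split
        · exact zero_mem _
        · exact h0
      · intro t
        rw [Polynomial.eraseLead_coeff]
        split
        · exact zero_mem _
        · exact ht t
    obtain ⟨hz2', m2⟩ := monomial_mem_aluffi I J hJI n (z.coeff (n + 1)) (ht n)
    have key : (⟨z, hz⟩ : reesAlgebra I) =
        ⟨z.eraseLead, hz1⟩ + ⟨monomial (n + 1) (z.coeff (n + 1)), hz2'⟩ :=
      Subtype.ext hsplit
    rw [key]
    exact add_mem m1 m2

lemma mem_aluffi_of_coeffs (I J : Ideal R) (hJI : J ≤ I) (w : reesAlgebra I)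
    (h0 : (w : R[X]).coeff 0 ∈ J) (ht : ∀ t, (w : R[X]).coeff (t + 1) ∈ J * I ^ t) :
    w ∈ aluffiIdeal I J :=
  mem_aluffi_of_coeffs_aux I J hJI (w : R[X]).natDegree (w : R[X]) w.2 le_rfl h0 ht

lemma artin_rees_vv [IsNoetherianRing R] (I J : Ideal R) :
    ∃ k : ℕ, ∀ t : ℕ, 1 ≤ t → I ^ k * (J ⊓ I ^ t) ≤ J * I ^ (t - 1) := by
  obtain ⟨k, hk⟩ := Ideal.exists_pow_inf_eq_pow_smul I (J : Submodule R R)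
  simp only [smul_eq_mul, Ideal.mul_top] at hk
  refine ⟨k, fun t ht => ?_⟩
  have h1 : I ^ k * (J ⊓ I ^ t) ≤ I ^ (k + t) ⊓ J := by
    refine le_inf ?_ ?_
    · calc I ^ k * (J ⊓ I ^ t) ≤ I ^ k * I ^ t := Ideal.mul_mono_right inf_le_right
        _ = I ^ (k + t) := (pow_add I k t).symm
    · exact le_trans (Ideal.mul_mono_right inf_le_left) Ideal.mul_le_right
  have h2 := hk (k + t) (by omega)
  rw [Nat.add_sub_cancel_left] at h2
  calc I ^ k * (J ⊓ I ^ t) ≤ I ^ (k + t) ⊓ J := h1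
    _ = I ^ t * (I ^ k ⊓ J) := h2
    _ ≤ I ^ t * J := Ideal.mul_mono_right inf_le_right
    _ ≤ I ^ (t - 1) * J := Ideal.mul_mono_left (Ideal.pow_le_pow_right (by omega))
    _ = J * I ^ (t - 1) := mul_comm _ _

/-- if `I/J` contains a regular element of `R/J`, the Valabrega–Valla
module `𝒱𝒱_{J⊆I}` — the image of `J̃` in the Aluffi algebra, i.e. the kernel of
`𝒜 ↠ Rees_{R/J}(I/J)` — equals the zeroth local cohomology `H⁰_{I/J}(𝒜)`, that is, the
set of elements of `𝒜` killed by a power of `I/J`.  In particular there is a `k ≥ 0`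
with `I^k·(J ∩ I^t) ⊆ J·I^{t-1}` for every `t ≥ 1`. -/
theorem valabrega_valla_is_zeroth_local_cohomology [IsNoetherianRing R]
    (I J : Ideal R) (hJI : J ≤ I) (hI : I ≠ ⊤)
    (hreg : ∃ b ∈ I, Ideal.Quotient.mk J b ∈ nonZeroDivisors (R ⧸ J)) :
    (∀ x : AluffiAlgebra I J,
      (x ∈ (tildeIdeal I J).map (Ideal.Quotient.mk (aluffiIdeal I J)) ↔
        ∃ n : ℕ, ∀ a ∈ I ^ n, algebraMap R (AluffiAlgebra I J) a * x = 0)) ∧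
    ∃ k : ℕ, ∀ t : ℕ, 1 ≤ t → I ^ k * (J ⊓ I ^ t) ≤ J * I ^ (t - 1) := by
  obtain ⟨k, hk⟩ := artin_rees_vv I J
  refine ⟨fun x => ⟨?_, ?_⟩, k, hk⟩
  · -- forward: image of tilde is killed by I^k
    intro hx
    obtain ⟨y, hy, rfl⟩ := (Ideal.mem_map_iff_of_surjective _ Ideal.Quotient.mk_surjective).mp hx
    rw [mem_tildeIdeal_iff] at hy
    refine ⟨k, fun a ha => ?_⟩
    have : algebraMap R (AluffiAlgebra I J) a * Ideal.Quotient.mk (aluffiIdeal I J) y =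
        Ideal.Quotient.mk (aluffiIdeal I J) (algebraMap R (reesAlgebra I) a * y) := rfl
    rw [this, Ideal.Quotient.eq_zero_iff_mem]
    apply mem_aluffi_of_coeffs I J hJI
    · have hco : ((algebraMap R (reesAlgebra I) a * y : reesAlgebra I) : R[X]) =
          C a * (y : R[X]) := rfl
      rw [hco, coeff_C_mul]
      exact Ideal.mul_mem_left J a (hy 0)
    · intro t
      have hco : ((algebraMap R (reesAlgebra I) a * y : reesAlgebra I) : R[X]) =
          C a * (y : R[X]) := rfl
      rw [hco, coeff_C_mul]
      have hmem : a * (y : R[X]).coeff (t + 1) ∈ I ^ k * (J ⊓ I ^ (t + 1)) :=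
        Ideal.mul_mem_mul ha
          (Submodule.mem_inf.mpr ⟨hy (t + 1), (mem_reesAlgebra_iff I _).mp y.2 (t + 1)⟩)
      have := hk (t + 1) (by omega) hmem
      rwa [Nat.add_sub_cancel] at this
  · -- backward: killed by a power implies coefficients in J, using the regular element
    rintro ⟨n, hn⟩
    obtain ⟨y, rfl⟩ := Ideal.Quotient.mk_surjective (I := aluffiIdeal I J) x
    obtain ⟨b, hbI, hbreg⟩ := hreg
    have hbn : b ^ n ∈ I ^ n := Ideal.pow_mem_pow hbI n
    have h0 := hn (b ^ n) hbn
    have heq : algebraMap R (AluffiAlgebra I J) (b ^ n) * Ideal.Quotient.mk (aluffiIdeal I J) y =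
        Ideal.Quotient.mk (aluffiIdeal I J) (algebraMap R (reesAlgebra I) (b ^ n) * y) := rfl
    rw [heq, Ideal.Quotient.eq_zero_iff_mem] at h0
    have hmemT : (algebraMap R (reesAlgebra I) (b ^ n) * y) ∈ tildeIdeal I J :=
      aluffi_le_tilde I J h0
    rw [mem_tildeIdeal_iff] at hmemT
    have hyT : y ∈ tildeIdeal I J := by
      rw [mem_tildeIdeal_iff]
      intro m
      have hc := hmemT m
      have hco : ((algebraMap R (reesAlgebra I) (b ^ n) * y : reesAlgebra I) : R[X]) =
          C (b ^ n) * (y : R[X]) := rfl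
      rw [hco, coeff_C_mul] at hc
      have hq : (Ideal.Quotient.mk J b) ^ n * Ideal.Quotient.mk J ((y : R[X]).coeff m) = 0 := by
        rw [← map_pow, ← map_mul, Ideal.Quotient.eq_zero_iff_mem]
        exact hc
      have hreg' : (Ideal.Quotient.mk J b) ^ n ∈ nonZeroDivisors (R ⧸ J) :=
        pow_mem hbreg n
      have := mem_nonZeroDivisors_iff_right.mp hreg' _ (by rw [mul_comm] at hq; exact hq)
      rwa [← Ideal.Quotient.eq_zero_iff_mem]
    exact Ideal.mem_map_of_mem _ hyT
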